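/- Let β' ∈ ℝ^V be defined by β'_i = θ_i² β_i, let W' be the symmetric matrix with entries W'_{i,j} = θ_i θ_j W_{i,j}, and let η'_i = θ_i η_i. Then β is distributed according to ν_V^{W,θ,η} if and only if β' is distributed according to ν_V^{W',1,η'}; that is, the pushforward of ν_V^{W,θ,η} by the map β ↦ (θ_i² β_i)_{i∈V} equals ν_V^{W',1,η'}, where 1 denotes the all-ones vector. -/

import Mathlib

open MeasureTheory Matrix

/-- The matrix `H_β = 2 diag(β) - W`. -/
noncomputable def Hmat {V : Type*} [Fintype V] [DecidableEq V]
    (W : Matrix V V ℝ) (β : V → ℝ) : Matrix V V ℝ :=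
  Matrix.diagonal (fun i => 2 * β i) - W

open scoped Classical in
/-- The density of the measure `ν_V^{W,θ,η}` with respect to Lebesgue measure. -/
noncomputable def nuDens {V : Type*} [Fintype V] [DecidableEq V]
    (W : Matrix V V ℝ) (θ η : V → ℝ) (β : V → ℝ) : ℝ :=
  if (Hmat W β).PosDef then
    (2 / Real.pi) ^ ((Fintype.card V : ℝ) / 2) *
      Real.exp (-(1/2) * (θ ⬝ᵥ ((Hmat W β) *ᵥ θ)) - (1/2) * (η ⬝ᵥ ((Hmat W β)⁻¹ *ᵥ η))
        + η ⬝ᵥ θ) *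
      (∏ i, θ i) / Real.sqrt (Hmat W β).det
  else 0

/-- The measure `ν_V^{W,θ,η}` on `ℝ^V`. -/
noncomputable def nuMeasure {V : Type*} [Fintype V] [DecidableEq V]
    (W : Matrix V V ℝ) (θ η : V → ℝ) : Measure (V → ℝ) :=
  volume.withDensity (fun β => ENNReal.ofReal (nuDens W θ η β))

section Aux

variable {V : Type*} [Fintype V] [DecidableEq V]

lemma Hmat_scale (W : Matrix V V ℝ) (θ β : V → ℝ) :
    Hmat (Matrix.of fun i j => θ i * θ j * W i j) (fun i => θ i ^ 2 * β i)
      = Matrix.diagonal θ * Hmat W β * Matrix.diagonal θ := by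
  ext i j
  simp only [Hmat, Matrix.sub_apply, Matrix.of_apply, Matrix.mul_diagonal,
    Matrix.diagonal_mul, Matrix.diagonal_apply]
  by_cases h : i = j <;> simp [h] <;> ring

lemma dot_diag_mulVec (θ x v : V → ℝ) :
    x ⬝ᵥ (Matrix.diagonal θ *ᵥ v) = (fun i => θ i * x i) ⬝ᵥ v := by
  simp only [dotProduct, Matrix.mulVec_diagonal]
  exact Finset.sum_congr rfl fun i _ => by ring

lemma posDef_diag_mul {A : Matrix V V ℝ} (hA : A.PosDef) (θ : V → ℝ) (hθ : ∀ i, θ i ≠ 0) :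
    (Matrix.diagonal θ * A * Matrix.diagonal θ).PosDef := by
  rw [Matrix.posDef_iff_dotProduct_mulVec]
  constructor
  · show _ = _
    rw [Matrix.conjTranspose_mul, Matrix.conjTranspose_mul, Matrix.diagonal_conjTranspose]
    have hstar : star θ = θ := by funext i; simp
    rw [hstar, hA.1.eq, Matrix.mul_assoc]
  · intro x hx
    have hDx : Matrix.diagonal θ *ᵥ x ≠ 0 := by
      intro h
      apply hx
      funext i
      have h2 := congrFun h i
      simp only [Matrix.mulVec_diagonal, Pi.zero_apply] at h2
      rcases mul_eq_zero.mp h2 with h3 | h3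
      · exact absurd h3 (hθ i)
      · exact h3
    have hpos := hA.dotProduct_mulVec_pos hDx
    have hstar : ∀ y : V → ℝ, star y = y := fun y => by funext i; simp
    rw [hstar] at hpos ⊢
    calc (0:ℝ) < (Matrix.diagonal θ *ᵥ x) ⬝ᵥ (A *ᵥ (Matrix.diagonal θ *ᵥ x)) := hpos
      _ = x ⬝ᵥ ((Matrix.diagonal θ * A * Matrix.diagonal θ) *ᵥ x) := by
          have hv : (Matrix.diagonal θ * A * Matrix.diagonal θ) *ᵥ x
              = Matrix.diagonal θ *ᵥ (A *ᵥ (Matrix.diagonal θ *ᵥ x)) := by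
            rw [← Matrix.mulVec_mulVec, ← Matrix.mulVec_mulVec]
          rw [hv, dot_diag_mulVec]
          congr 1
          funext i
          simp [Matrix.mulVec_diagonal]

lemma diag_cancel (A : Matrix V V ℝ) (θ : V → ℝ) (hθ : ∀ i, θ i ≠ 0) :
    Matrix.diagonal (fun i => (θ i)⁻¹) * (Matrix.diagonal θ * A * Matrix.diagonal θ)
      * Matrix.diagonal (fun i => (θ i)⁻¹) = A := by
  have h1 : Matrix.diagonal (fun i => (θ i)⁻¹) * Matrix.diagonal θ = 1 := by
    rw [Matrix.diagonal_mul_diagonal]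
    have : (fun i => (θ i)⁻¹ * θ i) = fun _ => (1:ℝ) := by
      funext i; exact inv_mul_cancel₀ (hθ i)
    rw [this, Matrix.diagonal_one]
  have h2 : Matrix.diagonal θ * Matrix.diagonal (fun i => (θ i)⁻¹) = 1 := by
    rw [Matrix.diagonal_mul_diagonal]
    have : (fun i => θ i * (θ i)⁻¹) = fun _ => (1:ℝ) := by
      funext i; exact mul_inv_cancel₀ (hθ i)
    rw [this, Matrix.diagonal_one]
  calc Matrix.diagonal (fun i => (θ i)⁻¹) * (Matrix.diagonal θ * A * Matrix.diagonal θ)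
      * Matrix.diagonal (fun i => (θ i)⁻¹)
      = (Matrix.diagonal (fun i => (θ i)⁻¹) * Matrix.diagonal θ) * A
        * (Matrix.diagonal θ * Matrix.diagonal (fun i => (θ i)⁻¹)) := by
        simp only [Matrix.mul_assoc]
    _ = A := by rw [h1, h2, Matrix.one_mul, Matrix.mul_one]

lemma posDef_diag_congr (A : Matrix V V ℝ) (θ : V → ℝ) (hθ : ∀ i, θ i ≠ 0) :
    (Matrix.diagonal θ * A * Matrix.diagonal θ).PosDef ↔ A.PosDef := by
  constructor
  · intro h
    have := posDef_diag_mul h (fun i => (θ i)⁻¹) (fun i => inv_ne_zero (hθ i))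
    rwa [diag_cancel A θ hθ] at this
  · intro h
    exact posDef_diag_mul h θ hθ

lemma diag_mul_inv_diag (θ : V → ℝ) (hθ : ∀ i, θ i ≠ 0) :
    Matrix.diagonal θ * Matrix.diagonal (fun i => (θ i)⁻¹) = 1 := by
  rw [Matrix.diagonal_mul_diagonal]
  have : (fun i => θ i * (θ i)⁻¹) = fun _ => (1:ℝ) := by
    funext i; exact mul_inv_cancel₀ (hθ i)
  rw [this, Matrix.diagonal_one]

lemma inv_diag_mul (A : Matrix V V ℝ) (θ : V → ℝ) (hθ : ∀ i, θ i ≠ 0) (hA : IsUnit A.det) :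
    (Matrix.diagonal θ * A * Matrix.diagonal θ)⁻¹
      = Matrix.diagonal (fun i => (θ i)⁻¹) * A⁻¹ * Matrix.diagonal (fun i => (θ i)⁻¹) := by
  apply Matrix.inv_eq_right_inv
  have e : (Matrix.diagonal θ * A * Matrix.diagonal θ) *
      (Matrix.diagonal (fun i => (θ i)⁻¹) * A⁻¹ * Matrix.diagonal (fun i => (θ i)⁻¹))
      = Matrix.diagonal θ * ((A * (Matrix.diagonal θ * Matrix.diagonal (fun i => (θ i)⁻¹)))
          * A⁻¹) * Matrix.diagonal (fun i => (θ i)⁻¹) := by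
    noncomm_ring
  rw [e, diag_mul_inv_diag θ hθ, Matrix.mul_one, Matrix.mul_nonsing_inv A hA,
    Matrix.mul_one, diag_mul_inv_diag θ hθ]

lemma nuDens_scale (W : Matrix V V ℝ) (θ η : V → ℝ) (hθ : ∀ i, 0 < θ i) (β : V → ℝ) :
    nuDens W θ η β = (∏ i, θ i ^ 2) *
      nuDens (Matrix.of fun i j => θ i * θ j * W i j) (fun _ => 1)
        (fun i => θ i * η i) (fun i => θ i ^ 2 * β i) := by
  classical
  have hθ' : ∀ i, θ i ≠ 0 := fun i => (hθ i).ne'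
  have hH' : Hmat (Matrix.of fun i j => θ i * θ j * W i j) (fun i => θ i ^ 2 * β i)
      = Matrix.diagonal θ * Hmat W β * Matrix.diagonal θ := Hmat_scale W θ β
  have hiff : (Matrix.diagonal θ * Hmat W β * Matrix.diagonal θ).PosDef ↔ (Hmat W β).PosDef :=
    posDef_diag_congr (Hmat W β) θ hθ'
  by_cases hpos : (Hmat W β).PosDef
  · rw [nuDens, nuDens, if_pos hpos, if_pos (by rw [hH']; exact hiff.mpr hpos)]
    rw [hH']
    have hD1 : Matrix.diagonal θ *ᵥ (fun _ => (1:ℝ)) = θ := by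
      funext i; simp [Matrix.mulVec_diagonal]
    -- quadratic form for θ
    have hq1 : (fun _ => (1:ℝ)) ⬝ᵥ ((Matrix.diagonal θ * Hmat W β * Matrix.diagonal θ) *ᵥ
        fun _ => 1) = θ ⬝ᵥ (Hmat W β *ᵥ θ) := by
      conv_lhs => rw [← Matrix.mulVec_mulVec, ← Matrix.mulVec_mulVec, hD1,
        dot_diag_mulVec θ (fun _ => (1:ℝ)) (Hmat W β *ᵥ θ)]
      congr 1
      funext i; simp
    -- quadratic form for η
    have hDη : Matrix.diagonal (fun i => (θ i)⁻¹) *ᵥ (fun i => θ i * η i) = η := by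
      funext i
      simp only [Matrix.mulVec_diagonal]
      rw [← mul_assoc, inv_mul_cancel₀ (hθ' i), one_mul]
    have hq2 : (fun i => θ i * η i) ⬝ᵥ
        ((Matrix.diagonal θ * Hmat W β * Matrix.diagonal θ)⁻¹ *ᵥ fun i => θ i * η i)
        = η ⬝ᵥ ((Hmat W β)⁻¹ *ᵥ η) := by
      rw [inv_diag_mul _ _ hθ' (isUnit_iff_ne_zero.mpr hpos.det_pos.ne')]
      conv_lhs => rw [← Matrix.mulVec_mulVec, ← Matrix.mulVec_mulVec, hDη,
        dot_diag_mulVec (fun i => (θ i)⁻¹) (fun i => θ i * η i) ((Hmat W β)⁻¹ *ᵥ η)]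
      congr 1
      funext i
      rw [← mul_assoc, inv_mul_cancel₀ (hθ' i), one_mul]
    -- linear term
    have hq3 : (fun i => θ i * η i) ⬝ᵥ (fun _ => (1:ℝ)) = η ⬝ᵥ θ := by
      simp [dotProduct, mul_comm]
    -- determinant
    have hdet : (Matrix.diagonal θ * Hmat W β * Matrix.diagonal θ).det
        = (∏ i, θ i) ^ 2 * (Hmat W β).det := by
      rw [Matrix.det_mul, Matrix.det_mul, Matrix.det_diagonal]
      ring
    have hprodpos : 0 < ∏ i, θ i := Finset.prod_pos fun i _ => hθ i
    have hdetpos : 0 < (Hmat W β).det := hpos.det_pos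
    have hsqrt : Real.sqrt (Matrix.diagonal θ * Hmat W β * Matrix.diagonal θ).det
        = (∏ i, θ i) * Real.sqrt (Hmat W β).det := by
      rw [hdet, Real.sqrt_mul (sq_nonneg _), Real.sqrt_sq hprodpos.le]
    rw [hq1, hq2, hq3, hsqrt]
    have hsqrtpos : 0 < Real.sqrt (Hmat W β).det := Real.sqrt_pos.mpr hdetpos
    have hprodsq : (∏ i, θ i ^ 2) = (∏ i, θ i) ^ 2 := by
      rw [Finset.prod_pow]
    rw [hprodsq, Finset.prod_const_one]
    field_simp
  · rw [nuDens, nuDens, if_neg hpos, if_neg (by rw [hH']; exact fun h => hpos (hiff.mp h))]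
    simp

end Aux

/-- Change of variables: if `β ~ ν_V^{W,θ,η}` then `β'_i = θ_i² β_i` is distributed
according to `ν_V^{W',1,η'}` with `W'_{i,j} = θ_i θ_j W_{i,j}` and `η'_i = θ_i η_i`. -/
theorem nu_change_of_variables (N : ℕ) (W : Matrix (Fin N) (Fin N) ℝ)
    (hWsymm : W.IsSymm) (hWnonneg : ∀ i j, 0 ≤ W i j)
    (hconn : (SimpleGraph.fromRel (fun i j => 0 < W i j)).Connected)
    (θ η : Fin N → ℝ) (hθ : ∀ i, 0 < θ i) (hη : ∀ i, 0 ≤ η i) :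
    Measure.map (fun β : Fin N → ℝ => fun i => θ i ^ 2 * β i) (nuMeasure W θ η) =
      nuMeasure (Matrix.of fun i j => θ i * θ j * W i j) (fun _ => 1)
        (fun i => θ i * η i) := by
  classical
  set T : (Fin N → ℝ) → (Fin N → ℝ) := fun β => fun i => θ i ^ 2 * β i with hT
  set g : (Fin N → ℝ) → ENNReal := fun β => ENNReal.ofReal
    (nuDens (Matrix.of fun i j => θ i * θ j * W i j) (fun _ => 1) (fun i => θ i * η i) β)
    with hg
  have hθ2 : ∀ i, (θ i ^ 2 : ℝ) ≠ 0 := fun i => pow_ne_zero 2 (hθ i).ne'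
  have hcpos : (0:ℝ) < ∏ i, θ i ^ 2 := Finset.prod_pos fun i _ => pow_pos (hθ i) 2
  set c : ENNReal := ENNReal.ofReal (∏ i, θ i ^ 2) with hc
  have hcne0 : c ≠ 0 := by simp [hc, hcpos]
  have hcnetop : c ≠ ⊤ := ENNReal.ofReal_ne_top
  -- T is the linear map given by the diagonal matrix
  have hTlin : T = ⇑(Matrix.toLin' (Matrix.diagonal fun i => θ i ^ 2)) := by
    funext β
    funext i
    simp [hT, Matrix.toLin'_apply, Matrix.mulVec_diagonal]
  have hTmeas : Measurable T := by
    rw [hTlin]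
    exact (Matrix.toLin' (Matrix.diagonal fun i => θ i ^ 2)).continuous_of_finiteDimensional.measurable
  -- T is a measurable embedding (it is a homeomorphism)
  have hTemb : MeasurableEmbedding T := by
    have : T = ⇑(Homeomorph.piCongrRight (fun i => Homeomorph.mulLeft₀ (θ i ^ 2) (hθ2 i))) := by
      funext β; funext i; rfl
    rw [this]
    exact (Homeomorph.piCongrRight fun i => Homeomorph.mulLeft₀ (θ i ^ 2) (hθ2 i)).measurableEmbedding
  -- pushforward of volume
  have hmapvol : Measure.map T volume = ENNReal.ofReal ((∏ i, θ i ^ 2)⁻¹) • volume := by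
    rw [hTlin, Real.map_matrix_volume_pi_eq_smul_volume_pi]
    · congr 1
      rw [Matrix.det_diagonal, abs_of_pos (by positivity)]
    · rw [Matrix.det_diagonal]
      exact hcpos.ne'
  have hvol : (volume : Measure (Fin N → ℝ)) = c • Measure.map T volume := by
    rw [hmapvol, smul_smul, hc, ← ENNReal.ofReal_mul hcpos.le,
      mul_inv_cancel₀ hcpos.ne', ENNReal.ofReal_one, one_smul]
  -- now prove the measure equality
  ext s hs
  rw [nuMeasure, nuMeasure, Measure.map_apply hTmeas hs,
    withDensity_apply _ (hTmeas hs), withDensity_apply _ hs]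
  have hdens : ∀ β, ENNReal.ofReal (nuDens W θ η β) = c * g (T β) := by
    intro β
    rw [nuDens_scale W θ η hθ β, ENNReal.ofReal_mul hcpos.le]
  calc ∫⁻ x in T ⁻¹' s, ENNReal.ofReal (nuDens W θ η x) ∂volume
      = ∫⁻ x in T ⁻¹' s, c * g (T x) ∂volume := by
        exact lintegral_congr fun x => hdens x
    _ = c * ∫⁻ x in T ⁻¹' s, g (T x) ∂volume := lintegral_const_mul' _ _ hcnetop
    _ = c * ∫⁻ x, g x ∂(Measure.map T (volume.restrict (T ⁻¹' s))) := by
        rw [hTemb.lintegral_map]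
    _ = c * ∫⁻ x in s, g x ∂(Measure.map T volume) := by
        rw [Measure.restrict_map hTmeas hs]
    _ = ∫⁻ x in s, g x ∂volume := by
        conv_rhs => rw [hvol]
        rw [Measure.restrict_smul, lintegral_smul_measure, smul_eq_mul]
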